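/- The (2,1)-QRAC rounding channel acts, in expectation, as the map that halves the X and Z components and annihilates the Y component: for every 2×2 complex matrix A, (1/2)·Σ_{i ∈ {1,2}} Σ_{s ∈ {+,−}} tr(ξ_i^s·A)·ξ_i^s = (1/2)·A + (1/4)·(tr A)·I − (1/4)·tr(Y·A)·Y. In particular the resulting channel E⁽²⁾ satisfies E⁽²⁾(I) = I, E⁽²⁾(Y) = 0, and E⁽²⁾(P) = (1/2)·P for P ∈ {X, Z}. -/

import Mathlib

open Matrix

/-- The Pauli `X` matrix. -/
noncomputable def PX : Matrix (Fin 2) (Fin 2) ℂ := !![0, 1; 1, 0]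

/-- The Pauli `Y` matrix. -/
noncomputable def PY : Matrix (Fin 2) (Fin 2) ℂ := !![0, -Complex.I; Complex.I, 0]

/-- The Pauli `Z` matrix. -/
noncomputable def PZ : Matrix (Fin 2) (Fin 2) ℂ := !![1, 0; 0, -1]

/-- `±1`-valued sign of a Boolean. -/
noncomputable def bsign (b : Bool) : ℝ := if b then 1 else -1

/-- The `(2,1)`-QRAC rounding states: `ξ₁^± = (1/2)·(I ± (1/√2)·(X + Z))` and
`ξ₂^± = X·ξ₁^±·X`. -/
noncomputable def xi : Fin 2 → Bool → Matrix (Fin 2) (Fin 2) ℂ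
  | 0, s => (1 / 2 : ℂ) • ((1 : Matrix (Fin 2) (Fin 2) ℂ) +
      ((bsign s : ℝ) : ℂ) • ((1 / (Real.sqrt 2 : ℂ)) • (PX + PZ)))
  | 1, s => PX * ((1 / 2 : ℂ) • ((1 : Matrix (Fin 2) (Fin 2) ℂ) +
      ((bsign s : ℝ) : ℂ) • ((1 / (Real.sqrt 2 : ℂ)) • (PX + PZ)))) * PX

noncomputable def cc (s : Bool) : ℂ := ((bsign s : ℝ) : ℂ) / (Real.sqrt 2 : ℂ)

lemma xi0 (s : Bool) : xi 0 s = !![(1 + cc s)/2, cc s / 2; cc s / 2, (1 - cc s)/2] := by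
  ext i j
  fin_cases i <;> fin_cases j <;>
    simp [xi, PX, PZ, cc, Matrix.one_fin_two] <;> ring

lemma xi1 (s : Bool) : xi 1 s = !![(1 - cc s)/2, cc s / 2; cc s / 2, (1 + cc s)/2] := by
  ext i j
  fin_cases i <;> fin_cases j <;>
    simp [xi, PX, PZ, cc, Matrix.one_fin_two, Matrix.mul_apply, Fin.sum_univ_two] <;> ring

lemma key (A : Matrix (Fin 2) (Fin 2) ℂ) :
    (1 / 2 : ℂ) • ∑ i : Fin 2, ∑ s : Bool, (xi i s * A).trace • xi i s =
      (1 / 2 : ℂ) • A + (1 / 4 : ℂ) • A.trace • (1 : Matrix (Fin 2) (Fin 2) ℂ) -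
        (1 / 4 : ℂ) • (PY * A).trace • PY := by
  have h2 : ((Real.sqrt 2 : ℂ)) * ((Real.sqrt 2 : ℂ)) = 2 := by
    rw [← Complex.ofReal_mul, Real.mul_self_sqrt (by norm_num)]; norm_num
  have hne : ((Real.sqrt 2 : ℂ)) ≠ 0 := by
    intro h; rw [h, mul_zero] at h2; norm_num at h2
  have hc : ∀ s, cc s * cc s = 1 / 2 := by
    intro s
    simp only [cc, bsign, div_mul_div_comm, h2]
    cases s <;> norm_num
  set c : ℂ := (1:ℂ) / (Real.sqrt 2 : ℂ) with hcdef
  have hcc : c * c = 1 / 2 := by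
    rw [hcdef, div_mul_div_comm, h2]; norm_num
  have h0t : cc true = c := by simp [cc, bsign, hcdef]
  have h0f : cc false = -c := by
    simp [cc, bsign, hcdef]; ring
  have hinv2 : ((Real.sqrt 2 : ℂ))⁻¹ ^ 2 = 1 / 2 := by
    rw [sq, ← mul_inv, h2]; norm_num
  rw [Fin.sum_univ_two]
  simp only [Fintype.sum_bool, xi0, xi1, h0t, h0f]
  ext i j
  fin_cases i <;> fin_cases j <;>
    simp only [PY, trace_fin_two, Matrix.mul_apply, Fin.sum_univ_two, Matrix.one_apply,
      Matrix.add_apply, Matrix.sub_apply, Matrix.smul_apply, Matrix.of_apply,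
      Matrix.cons_val', Matrix.cons_val_zero, Matrix.cons_val_one, Matrix.head_cons,
      Matrix.head_fin_const, Matrix.empty_val', Matrix.cons_val_fin_one, smul_eq_mul,
      Fin.mk_zero, Fin.mk_one, if_true, if_false, Fin.isValue, one_ne_zero, zero_ne_one,
      ite_true, ite_false, reduceIte] <;>
    (ring_nf; simp only [hinv2, Complex.I_sq, sq, hcc, Complex.I_mul_I]; ring)

theorem qrac2_rounding_channel (A : Matrix (Fin 2) (Fin 2) ℂ) :
    (1 / 2 : ℂ) • ∑ i : Fin 2, ∑ s : Bool, (xi i s * A).trace • xi i s =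
      (1 / 2 : ℂ) • A + (1 / 4 : ℂ) • A.trace • (1 : Matrix (Fin 2) (Fin 2) ℂ) -
        (1 / 4 : ℂ) • (PY * A).trace • PY ∧
    (1 / 2 : ℂ) • ∑ i : Fin 2, ∑ s : Bool,
        (xi i s * (1 : Matrix (Fin 2) (Fin 2) ℂ)).trace • xi i s = 1 ∧
    (1 / 2 : ℂ) • ∑ i : Fin 2, ∑ s : Bool, (xi i s * PY).trace • xi i s = 0 ∧
    (1 / 2 : ℂ) • ∑ i : Fin 2, ∑ s : Bool, (xi i s * PX).trace • xi i s = (1 / 2 : ℂ) • PX ∧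
    (1 / 2 : ℂ) • ∑ i : Fin 2, ∑ s : Bool, (xi i s * PZ).trace • xi i s = (1 / 2 : ℂ) • PZ := by
  refine ⟨key A, ?_, ?_, ?_, ?_⟩ <;>
  · rw [key]
    ext i j
    fin_cases i <;> fin_cases j <;>
      simp [PX, PY, PZ, trace_fin_two, Matrix.mul_apply, Fin.sum_univ_two, Matrix.one_apply] <;>
      ring
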